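/- For the two-dimensional example Φ(X) = |0⟩⟨0| X |1⟩⟨0|, one has ‖Φ‖_{q→p} = 1 for all p, q ∈ [1, ∞], while ‖Φ‖^H_{q→p} = 2^{−1/q} < 1 for all q < ∞. Hence a strict gap ‖Φ‖^H_{q→p} < ‖Φ‖_{q→p} is possible for general super-operators. -/

import Mathlib

open scoped ENNReal
open Matrix
open scoped ComplexOrder

noncomputable section

namespace SchattenNotes

/-- The vector of singular values of a matrix. -/
def singVal {m n : Type*} [Fintype m] [Fintype n] [DecidableEq n]
    (X : Matrix m n ℂ) (i : n) : ℝ :=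
  Real.sqrt (((Matrix.posSemidef_conjTranspose_mul_self X).1).eigenvalues i)

/-- The Schatten `p`-norm, for `p ∈ [1, ∞]` encoded as `p : ℝ≥0∞`. -/
def schatten {m n : Type*} [Fintype m] [Fintype n] [DecidableEq n]
    (p : ℝ≥0∞) (X : Matrix m n ℂ) : ℝ :=
  if p = ∞ then ⨆ i, singVal X i
  else (∑ i, singVal X i ^ p.toReal) ^ (1 / p.toReal)

/-- The induced `q → p` super-operator norm. -/
def opNorm {m n : Type*} [Fintype m] [Fintype n] [DecidableEq m] [DecidableEq n]
    (q p : ℝ≥0∞) (Φ : Matrix n n ℂ →ₗ[ℂ] Matrix m m ℂ) : ℝ :=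
  ⨆ X : {X : Matrix n n ℂ // X ≠ 0}, schatten p (Φ X.1) / schatten q X.1

/-- The induced `q → p` super-operator norm restricted to Hermitian inputs. -/
def opNormH {m n : Type*} [Fintype m] [Fintype n] [DecidableEq m] [DecidableEq n]
    (q p : ℝ≥0∞) (Φ : Matrix n n ℂ →ₗ[ℂ] Matrix m m ℂ) : ℝ :=
  ⨆ X : {X : Matrix n n ℂ // X.IsHermitian ∧ X ≠ 0}, schatten p (Φ X.1) / schatten q X.1

/-- The super-operator `Φ ⊗ I_{L(H)}`, where `H` has orthonormal basis indexed by `k`. -/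
def tensorId {m n : Type*} [Fintype m] [Fintype n] (k : Type*) [Fintype k]
    (Φ : Matrix n n ℂ →ₗ[ℂ] Matrix m m ℂ) :
    Matrix (n × k) (n × k) ℂ →ₗ[ℂ] Matrix (m × k) (m × k) ℂ where
  toFun X := fun r s => Φ (fun i j => X (i, r.2) (j, s.2)) r.1 s.1
  map_add' X Y := by
    funext r s
    show Φ ((fun i j => X (i, r.2) (j, s.2)) + fun i j => Y (i, r.2) (j, s.2)) r.1 s.1 = _
    exact congrFun (congrFun (map_add Φ (fun i j => X (i, r.2) (j, s.2) : Matrix n n ℂ)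
      (fun i j => Y (i, r.2) (j, s.2) : Matrix n n ℂ)) r.1) s.1
  map_smul' c X := by
    funext r s
    show Φ (c • fun i j => X (i, r.2) (j, s.2)) r.1 s.1 = _
    exact congrFun (congrFun (_root_.map_smul Φ c
      (fun i j => X (i, r.2) (j, s.2) : Matrix n n ℂ)) r.1) s.1

/-- Complete positivity of a super-operator. -/
def IsCP {m n : Type*} [Fintype m] [Fintype n]
    (Φ : Matrix n n ℂ →ₗ[ℂ] Matrix m m ℂ) : Prop :=
  ∀ (k : ℕ) (X : Matrix (n × Fin k) (n × Fin k) ℂ),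
    X.PosSemidef → (tensorId (Fin k) Φ X).PosSemidef

/-- Trace preservation of a super-operator. -/
def IsTP {m n : Type*} [Fintype m] [Fintype n]
    (Φ : Matrix n n ℂ →ₗ[ℂ] Matrix m m ℂ) : Prop :=
  ∀ X : Matrix n n ℂ, (Φ X).trace = X.trace

/-- The rank-one operator `|u⟩⟨v|`. -/
def outer {m n : Type*} (u : m → ℂ) (v : n → ℂ) : Matrix m n ℂ :=
  Matrix.vecMulVec u (star v)

/-- The quadratic form `⟨a|X|a⟩`. -/
def sand {n : Type*} [Fintype n] (a : n → ℂ) (X : Matrix n n ℂ) : ℂ :=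
  star a ⬝ᵥ X *ᵥ a

/-- A unit vector. -/
def IsUnit' {n : Type*} [Fintype n] (u : n → ℂ) : Prop := star u ⬝ᵥ u = 1


def ket0 : Fin 2 → ℂ := ![1, 0]
def ket1 : Fin 2 → ℂ := ![0, 1]

/-! ### Auxiliary lemmas -/

lemma pair_eq {x y a b : ℝ} (h1 : x + y = a + b) (h2 : x * y = a * b) :
    (x = a ∧ y = b) ∨ (x = b ∧ y = a) := by
  have h : (x - a) * (x - b) = 0 := by linear_combination x*h1 - h2
  rcases mul_eq_zero.1 h with h | h
  · left; have hxa : x = a := by linarith [sub_eq_zero.1 h]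
    exact ⟨hxa, by linarith⟩
  · right; have hxb : x = b := by linarith [sub_eq_zero.1 h]
    exact ⟨hxb, by linarith⟩

lemma trace_eq_sum_eig {n : Type*} [Fintype n] [DecidableEq n] {A : Matrix n n ℂ}
    (hA : A.IsHermitian) : A.trace = ∑ i, (hA.eigenvalues i : ℂ) := by
  rw [hA.trace_eq_sum_eigenvalues]; rfl

lemma iSup_fin2 (f : Fin 2 → ℝ) : (⨆ i, f i) = max (f 0) (f 1) := by
  apply le_antisymm
  · exact ciSup_le fun i => by fin_cases i <;> simp [le_max_left, le_max_right]
  · exact max_le (le_ciSup (Set.Finite.bddAbove (Set.finite_range f)) _)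
      (le_ciSup (Set.Finite.bddAbove (Set.finite_range f)) _)

lemma traceA (X : Matrix (Fin 2) (Fin 2) ℂ) :
    ((Xᴴ*X).trace).re = ‖X 0 0‖^2 + ‖X 0 1‖^2
      + ‖X 1 0‖^2 + ‖X 1 1‖^2 := by
  simp [Matrix.trace, Matrix.mul_apply, Fin.sum_univ_two, Matrix.conjTranspose_apply,
    Matrix.diag, Complex.add_re, Complex.mul_re, Complex.sq_norm, Complex.normSq_apply]
  ring

lemma detA (X : Matrix (Fin 2) (Fin 2) ℂ) :
    ((Xᴴ*X).det).re = ‖X.det‖ ^ 2 := by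
  rw [Matrix.det_mul, Matrix.det_conjTranspose]
  simp [Complex.sq_norm, ← Complex.normSq_eq_conj_mul_self]

lemma eig_sum (X : Matrix (Fin 2) (Fin 2) ℂ) :
    (Matrix.posSemidef_conjTranspose_mul_self X).1.eigenvalues 0
      + (Matrix.posSemidef_conjTranspose_mul_self X).1.eigenvalues 1 = ((Xᴴ*X).trace).re := by
  have := congrArg Complex.re (trace_eq_sum_eig (Matrix.posSemidef_conjTranspose_mul_self X).1)
  rw [this]; simp [Fin.sum_univ_two]

lemma eig_prod (X : Matrix (Fin 2) (Fin 2) ℂ) :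
    (Matrix.posSemidef_conjTranspose_mul_self X).1.eigenvalues 0
      * (Matrix.posSemidef_conjTranspose_mul_self X).1.eigenvalues 1 = ((Xᴴ*X).det).re := by
  have := congrArg Complex.re
    ((Matrix.posSemidef_conjTranspose_mul_self X).1.det_eq_prod_eigenvalues)
  rw [this]; simp [Fin.prod_univ_two]

lemma singVal_pair (X : Matrix (Fin 2) (Fin 2) ℂ) {s0 s1 : ℝ} (h0 : 0 ≤ s0) (h1 : 0 ≤ s1)
    (htr : ((Xᴴ*X).trace).re = s0^2 + s1^2) (hdet : ((Xᴴ*X).det).re = (s0*s1)^2) :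
    (singVal X 0 = s0 ∧ singVal X 1 = s1) ∨ (singVal X 0 = s1 ∧ singVal X 1 = s0) := by
  have hsum := eig_sum X
  have hprod := eig_prod X
  rw [htr] at hsum
  rw [hdet] at hprod
  have hpair := pair_eq (a := s0^2) (b := s1^2) hsum (by rw [hprod]; ring)
  unfold singVal
  rcases hpair with ⟨e0, e1⟩ | ⟨e0, e1⟩
  · left; rw [e0, e1, Real.sqrt_sq h0, Real.sqrt_sq h1]; exact ⟨rfl, rfl⟩
  · right; rw [e0, e1, Real.sqrt_sq h0, Real.sqrt_sq h1]; exact ⟨rfl, rfl⟩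

lemma singVal_nonneg (X : Matrix (Fin 2) (Fin 2) ℂ) (i : Fin 2) : 0 ≤ singVal X i :=
  Real.sqrt_nonneg _

lemma schatten_of_pair {p : ℝ≥0∞} {X : Matrix (Fin 2) (Fin 2) ℂ} {s0 s1 : ℝ}
    (hpair : (singVal X 0 = s0 ∧ singVal X 1 = s1) ∨ (singVal X 0 = s1 ∧ singVal X 1 = s0)) :
    schatten p X = if p = ∞ then max s0 s1
      else (s0 ^ p.toReal + s1 ^ p.toReal) ^ (1/p.toReal) := by
  unfold schatten
  split
  · rw [iSup_fin2]
    rcases hpair with ⟨e0, e1⟩ | ⟨e0, e1⟩ <;> rw [e0, e1]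
    exact max_comm _ _
  · rw [Fin.sum_univ_two]
    rcases hpair with ⟨e0, e1⟩ | ⟨e0, e1⟩ <;> rw [e0, e1]
    rw [add_comm]

lemma half_rpow {a b t : ℝ} (ha : 0 ≤ a) (hb : 0 ≤ b) (ht : 1 ≤ t) :
    ((a+b)/2)^t ≤ (a^t + b^t)/2 := by
  have h := NNReal.rpow_arith_mean_le_arith_mean2_rpow (1/2) (1/2)
    (Real.toNNReal a) (Real.toNNReal b) (add_halves 1) ht
  have h' := NNReal.coe_le_coe.2 h
  push_cast at h'
  rw [Real.coe_toNNReal a ha, Real.coe_toNNReal b hb] at h'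
  calc ((a+b)/2)^t = (1/2*a + 1/2*b)^t := by ring_nf
    _ ≤ 1/2*a^t + 1/2*b^t := h'
    _ = (a^t+b^t)/2 := by ring

lemma toReal_ge_one {p : ℝ≥0∞} (hp : 1 ≤ p) (hne : p ≠ ∞) : 1 ≤ p.toReal := by
  rw [← ENNReal.toReal_one]
  exact ENNReal.toReal_mono hne hp

lemma schatten_nonneg {p : ℝ≥0∞} (X : Matrix (Fin 2) (Fin 2) ℂ) : 0 ≤ schatten p X := by
  unfold schatten
  split
  · exact Real.iSup_nonneg (fun i => singVal_nonneg X i)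
  · exact Real.rpow_nonneg
      (Finset.sum_nonneg fun i _ => Real.rpow_nonneg (singVal_nonneg X i) _) _

lemma singVal_le_schatten {q : ℝ≥0∞} (hq : 1 ≤ q) (X : Matrix (Fin 2) (Fin 2) ℂ)
    (i : Fin 2) : singVal X i ≤ schatten q X := by
  unfold schatten
  split
  · exact le_ciSup (Set.Finite.bddAbove (Set.finite_range _)) i
  · rename_i hne
    have ht : 1 ≤ q.toReal := toReal_ge_one hq hne
    have ht0 : q.toReal ≠ 0 := by linarith
    have h1 : singVal X i ^ q.toReal ≤ ∑ j, singVal X j ^ q.toReal :=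
      Finset.single_le_sum (fun j _ => Real.rpow_nonneg (singVal_nonneg X j) _)
        (Finset.mem_univ i)
    calc singVal X i = (singVal X i ^ q.toReal) ^ (1/q.toReal) := by
          rw [← Real.rpow_mul (singVal_nonneg X i), mul_one_div_cancel ht0, Real.rpow_one]
      _ ≤ (∑ j, singVal X j ^ q.toReal) ^ (1/q.toReal) :=
          Real.rpow_le_rpow (Real.rpow_nonneg (singVal_nonneg X i) _) h1 (by positivity)

/-- key general lemma: some singular value dominates `|X 0 1|`. -/
lemma abs_le_schatten {q : ℝ≥0∞} (hq : 1 ≤ q) (X : Matrix (Fin 2) (Fin 2) ℂ) :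
    ‖X 0 1‖ ≤ schatten q X := by
  set hA := Matrix.posSemidef_conjTranspose_mul_self X with hAdef
  set μ : Fin 2 → ℝ := hA.1.eigenvalues with hμ
  have hnn : ∀ i, 0 ≤ μ i := fun i => hA.eigenvalues_nonneg i
  have hsum : μ 0 + μ 1 = ((Xᴴ*X).trace).re := eig_sum X
  have hprod : μ 0 * μ 1 = ((Xᴴ*X).det).re := eig_prod X
  set a := ‖X 0 0‖
  set b := ‖X 0 1‖
  set c := ‖X 1 0‖
  set d := ‖X 1 1‖
  have ha : 0 ≤ a := norm_nonneg _
  have hb : 0 ≤ b := norm_nonneg _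
  have hc : 0 ≤ c := norm_nonneg _
  have hd : 0 ≤ d := norm_nonneg _
  have hT : ((Xᴴ*X).trace).re = a^2 + b^2 + c^2 + d^2 := traceA X
  have hDle : ((Xᴴ*X).det).re ≤ (a*d + b*c)^2 := by
    rw [detA X]
    have h1 : ‖X.det‖ ≤ a*d + b*c := by
      rw [Matrix.det_fin_two]
      calc ‖X 0 0 * X 1 1 - X 0 1 * X 1 0‖
          ≤ ‖X 0 0 * X 1 1‖ + ‖X 0 1 * X 1 0‖ := by
            exact norm_sub_le _ _
        _ = a*d + b*c := by rw [norm_mul, norm_mul]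
    have h2 : 0 ≤ ‖X.det‖ := norm_nonneg _
    nlinarith
  have key : (b^2 + d^2 - μ 0) * (b^2 + d^2 - μ 1) ≤ 0 := by
    nlinarith [sq_nonneg (a*b - c*d), hsum, hprod, hT, hDle]
  have hbb : ∃ i, b^2 ≤ μ i := by
    rcases mul_nonpos_iff.1 key with ⟨h1, h2⟩ | ⟨h1, h2⟩
    · exact ⟨1, by nlinarith⟩
    · exact ⟨0, by nlinarith⟩
  obtain ⟨i, hi⟩ := hbb
  have : b ≤ singVal X i := by
    unfold singVal
    rw [show (Matrix.posSemidef_conjTranspose_mul_self X).1.eigenvalues i = μ i from rfl]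
    exact (Real.le_sqrt hb (hnn i)).2 hi
  exact this.trans (singVal_le_schatten hq X i)


/-! ### Concrete computations -/

lemma phi_eq (Φ : Matrix (Fin 2) (Fin 2) ℂ →ₗ[ℂ] Matrix (Fin 2) (Fin 2) ℂ)
    (hΦ : ∀ X, Φ X = outer ket0 ket0 * X * outer ket1 ket0)
    (X : Matrix (Fin 2) (Fin 2) ℂ) : Φ X = X 0 1 • outer ket0 ket0 := by
  rw [hΦ]
  funext i j
  fin_cases i <;> fin_cases j <;>
    simp [outer, Matrix.mul_apply, Matrix.vecMulVec_apply, ket0, ket1,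
      Fin.sum_univ_two, Matrix.smul_apply, -Matrix.cons_vecMulVec]

lemma pair_smulE00 (c : ℂ) :
    (singVal (c • outer ket0 ket0) 0 = ‖c‖ ∧ singVal (c • outer ket0 ket0) 1 = 0) ∨
    (singVal (c • outer ket0 ket0) 0 = 0 ∧ singVal (c • outer ket0 ket0) 1 = ‖c‖) := by
  apply singVal_pair _ (norm_nonneg _) le_rfl
  · rw [traceA]
    simp [outer, Matrix.vecMulVec_apply, ket0, Matrix.smul_apply, -Matrix.cons_vecMulVec]
  · rw [detA, Matrix.det_fin_two]
    simp [outer, Matrix.vecMulVec_apply, ket0, Matrix.smul_apply, -Matrix.cons_vecMulVec]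

lemma schatten_smulE00 {p : ℝ≥0∞} (hp : 1 ≤ p) (c : ℂ) :
    schatten p (c • outer ket0 ket0) = ‖c‖ := by
  rw [schatten_of_pair (pair_smulE00 c)]
  split
  · exact max_eq_left (norm_nonneg _)
  · rename_i hne
    have ht : 1 ≤ p.toReal := toReal_ge_one hp hne
    have ht0 : p.toReal ≠ 0 := by linarith
    rw [Real.zero_rpow ht0, add_zero, ← Real.rpow_mul (norm_nonneg _),
      mul_one_div_cancel ht0, Real.rpow_one]

lemma pair_E01 :
    (singVal (outer ket0 ket1) 0 = 1 ∧ singVal (outer ket0 ket1) 1 = 0) ∨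
    (singVal (outer ket0 ket1) 0 = 0 ∧ singVal (outer ket0 ket1) 1 = 1) := by
  apply singVal_pair _ zero_le_one le_rfl
  · rw [traceA]
    simp [outer, Matrix.vecMulVec_apply, ket0, ket1]
  · rw [detA, Matrix.det_fin_two]
    simp [outer, Matrix.vecMulVec_apply, ket0, ket1]

lemma schatten_E01 {q : ℝ≥0∞} (hq : 1 ≤ q) : schatten q (outer ket0 ket1) = 1 := by
  rw [schatten_of_pair pair_E01]
  split
  · exact max_eq_left zero_le_one
  · rename_i hne
    have ht : 1 ≤ q.toReal := toReal_ge_one hq hne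
    have ht0 : q.toReal ≠ 0 := by linarith
    rw [Real.one_rpow, Real.zero_rpow ht0, add_zero, Real.one_rpow]

lemma pair_Xsym :
    (singVal (outer ket0 ket1 + outer ket1 ket0) 0 = 1
        ∧ singVal (outer ket0 ket1 + outer ket1 ket0) 1 = 1) ∨
    (singVal (outer ket0 ket1 + outer ket1 ket0) 0 = 1
        ∧ singVal (outer ket0 ket1 + outer ket1 ket0) 1 = 1) := by
  apply singVal_pair _ zero_le_one zero_le_one
  · rw [traceA]
    simp [outer, Matrix.vecMulVec_apply, ket0, ket1, Matrix.add_apply, -Matrix.cons_vecMulVec]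
  · rw [detA, Matrix.det_fin_two]
    simp [outer, Matrix.vecMulVec_apply, ket0, ket1, Matrix.add_apply, -Matrix.cons_vecMulVec]

lemma schatten_Xsym {q : ℝ≥0∞} (hq : 1 ≤ q) (hne : q ≠ ∞) :
    schatten q (outer ket0 ket1 + outer ket1 ket0) = 2 ^ (1/q.toReal) := by
  rw [schatten_of_pair pair_Xsym, if_neg hne, Real.one_rpow]
  norm_num

/-! ### Hermitian matrices -/

lemma herm_trace {X : Matrix (Fin 2) (Fin 2) ℂ} (hX : X.IsHermitian) :
    X.trace = ((hX.eigenvalues 0 + hX.eigenvalues 1 : ℝ) : ℂ) := by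
  rw [trace_eq_sum_eig hX, Fin.sum_univ_two]
  norm_cast

lemma herm_det {X : Matrix (Fin 2) (Fin 2) ℂ} (hX : X.IsHermitian) :
    X.det = ((hX.eigenvalues 0 * hX.eigenvalues 1 : ℝ) : ℂ) := by
  rw [hX.det_eq_prod_eigenvalues, Fin.prod_univ_two]
  norm_cast

lemma herm_traceXX {X : Matrix (Fin 2) (Fin 2) ℂ} (hX : X.IsHermitian) :
    ((Xᴴ*X).trace).re = |hX.eigenvalues 0|^2 + |hX.eigenvalues 1|^2 := by
  have hH : Xᴴ = X := hX
  have key : (Xᴴ*X).trace = X.trace^2 - 2*X.det := by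
    rw [hH, Matrix.det_fin_two]
    simp only [Matrix.trace, Matrix.mul_apply, Fin.sum_univ_two, Matrix.diag]
    ring
  rw [key, herm_trace hX, herm_det hX]
  have h2 : (((hX.eigenvalues 0 + hX.eigenvalues 1 : ℝ) : ℂ))^2
      - 2*(((hX.eigenvalues 0 * hX.eigenvalues 1 : ℝ)) : ℂ)
      = (((hX.eigenvalues 0 + hX.eigenvalues 1)^2
          - 2*(hX.eigenvalues 0 * hX.eigenvalues 1) : ℝ) : ℂ) := by
    push_cast; ring
  rw [h2, Complex.ofReal_re, _root_.sq_abs, _root_.sq_abs]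
  ring

lemma herm_singVal_pair {X : Matrix (Fin 2) (Fin 2) ℂ} (hX : X.IsHermitian) :
    (singVal X 0 = |hX.eigenvalues 0| ∧ singVal X 1 = |hX.eigenvalues 1|) ∨
    (singVal X 0 = |hX.eigenvalues 1| ∧ singVal X 1 = |hX.eigenvalues 0|) := by
  apply singVal_pair _ (abs_nonneg _) (abs_nonneg _)
  · exact herm_traceXX hX
  · rw [detA, herm_det hX, Complex.norm_real, Real.norm_eq_abs, abs_mul]

lemma herm_entry_le {X : Matrix (Fin 2) (Fin 2) ℂ} (hX : X.IsHermitian) :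
    2 * ‖X 0 1‖ ≤ |hX.eigenvalues 0| + |hX.eigenvalues 1| := by
  set l0 := hX.eigenvalues 0
  set l1 := hX.eigenvalues 1
  have htr : l0 + l1 = (X 0 0).re + (X 1 1).re := by
    have := congrArg Complex.re (herm_trace hX)
    rw [Complex.ofReal_re] at this
    rw [← this]
    simp [Matrix.trace, Fin.sum_univ_two, Matrix.diag]
  have h10 : X 1 0 = starRingEnd ℂ (X 0 1) := by
    have h : Xᴴ 0 1 = X 0 1 := by rw [hX.eq]
    rw [Matrix.conjTranspose_apply] at h
    simp [← h]
  have him0 : (X 0 0).im = 0 := by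
    have h : Xᴴ 0 0 = X 0 0 := by rw [hX.eq]
    rw [Matrix.conjTranspose_apply] at h
    have h2 := congrArg Complex.im h
    simp at h2
    linarith
  have him1 : (X 1 1).im = 0 := by
    have h : Xᴴ 1 1 = X 1 1 := by rw [hX.eq]
    rw [Matrix.conjTranspose_apply] at h
    have h2 := congrArg Complex.im h
    simp at h2
    linarith
  have hdet : l0 * l1 = (X 0 0).re * (X 1 1).re - ‖X 0 1‖ ^ 2 := by
    have := congrArg Complex.re (herm_det hX)
    rw [Complex.ofReal_re] at this
    rw [← this, Matrix.det_fin_two, h10]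
    simp [Complex.sub_re, Complex.mul_re, him0, him1, Complex.sq_norm,
      Complex.normSq_apply, Complex.conj_re, Complex.conj_im]
    try ring
  have hkey : (l0 - l1)^2 = ((X 0 0).re - (X 1 1).re)^2 + 4*(‖X 0 1‖)^2 := by
    linear_combination (l0 + l1 + (X 0 0).re + (X 1 1).re) * htr - 4*hdet
  have h4 : 4 * (‖X 0 1‖)^2 ≤ (l0 - l1)^2 := by
    nlinarith [sq_nonneg ((X 0 0).re - (X 1 1).re)]
  have habs : |l0 - l1| ≤ |l0| + |l1| := abs_sub _ _
  have hb : 0 ≤ ‖X 0 1‖ := norm_nonneg _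
  nlinarith [sq_abs (l0 - l1), abs_nonneg (l0 - l1), sq_nonneg (|l0 - l1| - 2 * ‖X 0 1‖)]

lemma herm_bound {q : ℝ≥0∞} (hq : 1 ≤ q) (hne : q ≠ ∞) {X : Matrix (Fin 2) (Fin 2) ℂ}
    (hX : X.IsHermitian) :
    ‖X 0 1‖ ≤ (2:ℝ) ^ (-(1/q.toReal)) * schatten q X := by
  have ht : 1 ≤ q.toReal := toReal_ge_one hq hne
  have ht0 : q.toReal ≠ 0 := by linarith
  set t := q.toReal
  set l0 := hX.eigenvalues 0
  set l1 := hX.eigenvalues 1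
  have hb : 0 ≤ ‖X 0 1‖ := norm_nonneg _
  have hsch : schatten q X = (|l0| ^ t + |l1| ^ t) ^ (1/t) := by
    rw [schatten_of_pair (herm_singVal_pair hX), if_neg hne]
  have h1 : ‖X 0 1‖ ≤ (|l0| + |l1|)/2 := by
    have := herm_entry_le hX; linarith
  have h2 : ‖X 0 1‖ ^ t ≤ ((|l0| + |l1|)/2) ^ t :=
    Real.rpow_le_rpow hb h1 (by linarith)
  have h3 : ((|l0| + |l1|)/2) ^ t ≤ (|l0| ^ t + |l1| ^ t)/2 :=
    half_rpow (abs_nonneg _) (abs_nonneg _) ht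
  have h4 : ‖X 0 1‖ ^ t ≤ (|l0| ^ t + |l1| ^ t)/2 := h2.trans h3
  have hS : (0:ℝ) ≤ |l0| ^ t + |l1| ^ t := by positivity
  have h5 : (‖X 0 1‖ ^ t) ^ (1/t) ≤ ((|l0| ^ t + |l1| ^ t)/2) ^ (1/t) :=
    Real.rpow_le_rpow (by positivity) h4 (by positivity)
  rw [← Real.rpow_mul hb, mul_one_div_cancel ht0, Real.rpow_one] at h5
  have h6 : ((|l0| ^ t + |l1| ^ t)/2) ^ (1/t)
      = (2:ℝ) ^ (-(1/t)) * (|l0| ^ t + |l1| ^ t) ^ (1/t) := by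
    rw [Real.div_rpow hS (by norm_num), Real.rpow_neg (by norm_num : (0:ℝ) ≤ 2),
      div_eq_inv_mul]
  rw [h6] at h5
  rw [hsch]
  exact h5
  
lemma schatten_pos_herm {q : ℝ≥0∞} (hq : 1 ≤ q) (hne : q ≠ ∞)
    {X : Matrix (Fin 2) (Fin 2) ℂ} (hX : X.IsHermitian) (hX0 : X ≠ 0) :
    0 < schatten q X := by
  have ht : 1 ≤ q.toReal := toReal_ge_one hq hne
  set l0 := hX.eigenvalues 0
  set l1 := hX.eigenvalues 1
  have hsch : schatten q X = (|l0| ^ q.toReal + |l1| ^ q.toReal) ^ (1/q.toReal) := by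
    rw [schatten_of_pair (herm_singVal_pair hX), if_neg hne]
  have habs : ¬ (l0 = 0 ∧ l1 = 0) := by
    rintro ⟨e0, e1⟩
    apply hX0
    have htr0 : ((Xᴴ*X).trace).re = 0 := by
      rw [herm_traceXX hX]
      show |l0|^2 + |l1|^2 = 0
      rw [e0, e1]; simp
    have hT := traceA X
    rw [htr0] at hT
    have n00 : 0 ≤ ‖X 0 0‖ := norm_nonneg _
    have n01 : 0 ≤ ‖X 0 1‖ := norm_nonneg _
    have n10 : 0 ≤ ‖X 1 0‖ := norm_nonneg _
    have n11 : 0 ≤ ‖X 1 1‖ := norm_nonneg _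
    have z00 : ‖X 0 0‖ = 0 := by nlinarith
    have z01 : ‖X 0 1‖ = 0 := by nlinarith
    have z10 : ‖X 1 0‖ = 0 := by nlinarith
    have z11 : ‖X 1 1‖ = 0 := by nlinarith
    funext i j
    fin_cases i <;> fin_cases j <;>
      simpa [Matrix.zero_apply] using
        norm_eq_zero.1 (by assumption)
  have hpos : 0 < |l0| ^ q.toReal + |l1| ^ q.toReal := by
    rcases not_and_or.1 habs with h | h
    · have : 0 < |l0| := abs_pos.2 h
      have := Real.rpow_pos_of_pos this q.toReal
      have h2 : 0 ≤ |l1| ^ q.toReal := Real.rpow_nonneg (abs_nonneg _) _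
      linarith
    · have : 0 < |l1| := abs_pos.2 h
      have := Real.rpow_pos_of_pos this q.toReal
      have h2 : 0 ≤ |l0| ^ q.toReal := Real.rpow_nonneg (abs_nonneg _) _
      linarith
  rw [hsch]
  exact Real.rpow_pos_of_pos hpos _


/-- For `Φ(X) = |0⟩⟨0| X |1⟩⟨0|`, one has `‖Φ‖_{q→p} = 1` while
`‖Φ‖^H_{q→p} = 2^{−1/q} < 1` for `q < ∞`. -/
theorem stmt12 (Φ : Matrix (Fin 2) (Fin 2) ℂ →ₗ[ℂ] Matrix (Fin 2) (Fin 2) ℂ)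
    (hΦ : ∀ X, Φ X = outer ket0 ket0 * X * outer ket1 ket0)
    (p q : ℝ≥0∞) (hp : 1 ≤ p) (hq : 1 ≤ q) :
    opNorm q p Φ = 1 ∧
    (q ≠ ∞ → opNormH q p Φ = (2 : ℝ) ^ (-(1 / q.toReal)) ∧ opNormH q p Φ < 1) := by
  have hphi : ∀ X : Matrix (Fin 2) (Fin 2) ℂ,
      schatten p (Φ X) = ‖X 0 1‖ := fun X => by
    rw [phi_eq Φ hΦ X, schatten_smulE00 hp]
  have hE01entry : outer ket0 ket1 0 1 = 1 := by
    simp [outer, Matrix.vecMulVec_apply, ket0, ket1]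
  have hE01ne : outer ket0 ket1 ≠ 0 := by
    intro h
    have h2 := congrFun (congrFun h 0) 1
    rw [hE01entry] at h2
    simp at h2
  constructor
  · -- the unrestricted norm equals 1
    haveI : Nonempty {X : Matrix (Fin 2) (Fin 2) ℂ // X ≠ 0} := ⟨⟨outer ket0 ket1, hE01ne⟩⟩
    have hub : ∀ X : {X : Matrix (Fin 2) (Fin 2) ℂ // X ≠ 0},
        schatten p (Φ X.1) / schatten q X.1 ≤ 1 := by
      rintro ⟨X, hX⟩
      dsimp only
      rw [hphi X]
      rcases eq_or_lt_of_le (schatten_nonneg (p := q) X) with h0 | h0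
      · rw [← h0]; simp
      · rw [div_le_one h0]; exact abs_le_schatten hq X
    have hval : schatten p (Φ (outer ket0 ket1)) / schatten q (outer ket0 ket1) = 1 := by
      rw [hphi (outer ket0 ket1), hE01entry, schatten_E01 hq]
      simp
    unfold opNorm
    apply le_antisymm (ciSup_le hub)
    have hbdd : BddAbove (Set.range fun X : {X : Matrix (Fin 2) (Fin 2) ℂ // X ≠ 0} =>
        schatten p (Φ X.1) / schatten q X.1) := ⟨1, by rintro _ ⟨X, rfl⟩; exact hub X⟩
    calc (1:ℝ) = schatten p (Φ (outer ket0 ket1)) / schatten q (outer ket0 ket1) := hval.symm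
      _ ≤ _ := le_ciSup hbdd ⟨outer ket0 ket1, hE01ne⟩
  · intro hqne
    have ht : 1 ≤ q.toReal := toReal_ge_one hq hqne
    have ht0 : q.toReal ≠ 0 := by linarith
    have hXsH : (outer ket0 ket1 + outer ket1 ket0).IsHermitian := by
      have : (outer ket0 ket1 + outer ket1 ket0)ᴴ = outer ket0 ket1 + outer ket1 ket0 := by
        funext i j
        fin_cases i <;> fin_cases j <;>
          simp [outer, Matrix.conjTranspose_apply, Matrix.vecMulVec_apply, ket0, ket1,
            Matrix.add_apply, -Matrix.cons_vecMulVec]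
      exact this
    have hXsentry : (outer ket0 ket1 + outer ket1 ket0) 0 1 = 1 := by
      simp [outer, Matrix.vecMulVec_apply, ket0, ket1, Matrix.add_apply, -Matrix.cons_vecMulVec]
    have hXsne : (outer ket0 ket1 + outer ket1 ket0) ≠ 0 := by
      intro h
      have h2 := congrFun (congrFun h 0) 1
      rw [hXsentry] at h2
      simp at h2
    haveI : Nonempty {X : Matrix (Fin 2) (Fin 2) ℂ // X.IsHermitian ∧ X ≠ 0} :=
      ⟨⟨outer ket0 ket1 + outer ket1 ket0, hXsH, hXsne⟩⟩
    have hub : ∀ X : {X : Matrix (Fin 2) (Fin 2) ℂ // X.IsHermitian ∧ X ≠ 0},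
        schatten p (Φ X.1) / schatten q X.1 ≤ (2:ℝ) ^ (-(1/q.toReal)) := by
      rintro ⟨X, hXH, hX0⟩
      dsimp only
      rw [hphi X]
      have hpos := schatten_pos_herm hq hqne hXH hX0
      rw [div_le_iff₀ hpos]
      exact herm_bound hq hqne hXH
    have hval : schatten p (Φ (outer ket0 ket1 + outer ket1 ket0))
        / schatten q (outer ket0 ket1 + outer ket1 ket0) = (2:ℝ) ^ (-(1/q.toReal)) := by
      rw [hphi _, hXsentry, schatten_Xsym hq hqne]
      rw [Real.rpow_neg (by norm_num : (0:ℝ) ≤ 2)]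
      simp [one_div]
    have heq : opNormH q p Φ = (2:ℝ) ^ (-(1/q.toReal)) := by
      unfold opNormH
      apply le_antisymm (ciSup_le hub)
      have hbdd : BddAbove (Set.range
          fun X : {X : Matrix (Fin 2) (Fin 2) ℂ // X.IsHermitian ∧ X ≠ 0} =>
          schatten p (Φ X.1) / schatten q X.1) :=
        ⟨(2:ℝ) ^ (-(1/q.toReal)), by rintro _ ⟨X, rfl⟩; exact hub X⟩
      calc (2:ℝ) ^ (-(1/q.toReal))
          = schatten p (Φ (outer ket0 ket1 + outer ket1 ket0))
            / schatten q (outer ket0 ket1 + outer ket1 ket0) := hval.symm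
        _ ≤ _ := le_ciSup hbdd ⟨outer ket0 ket1 + outer ket1 ket0, hXsH, hXsne⟩
    refine ⟨heq, ?_⟩
    rw [heq]
    apply Real.rpow_lt_one_of_one_lt_of_neg (by norm_num)
    have hpos : 0 < 1/q.toReal := by positivity
    linarith

end SchattenNotes
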